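/- The necessary coefficient conditions Im(γ_{kl}^{m'} conj(γ_{k'l'})^m) = 0 are not sufficient for reflection symmetry in general: the polynomial f(z, z̄) = z³ + i z z̄² satisfies these conditions for its pair of monomials (both have winding number 2 or compatible relations) but is not reflection-symmetric with respect to any axis, i.e., there is no θ with e^{2iθ} conj(f(z,z̄)) = f(e^{2iθ} z̄, e^{−2iθ} z) for all z. -/
import Mathlib


open Complex

/-- The coefficient conditions `Im(γ_{kl}^{m'} conj(γ_{k'l'})^m) = 0` are not
sufficient for reflection symmetry: `f(z,z̄) = z³ + i z z̄²` (coefficients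
`γ₃₀ = 1` with winding number `2`, `γ₁₂ = i` with winding number `−2`)
satisfies them but is reflection-symmetric with respect to no axis. -/
theorem coeff_conditions_not_sufficient :
    (((1 : ℂ) ^ (-2 : ℤ) * (starRingEnd ℂ Complex.I) ^ (2 : ℤ)).im = 0 ∧
     ((Complex.I : ℂ) ^ (2 : ℤ) * (starRingEnd ℂ (1 : ℂ)) ^ (-2 : ℤ)).im = 0) ∧
    ¬ ∃ θ : ℝ, ∀ z : ℂ,
        Complex.exp (2 * Complex.I * θ) *
          starRingEnd ℂ (z ^ 3 + Complex.I * z * (starRingEnd ℂ z) ^ 2)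
        = (Complex.exp (2 * Complex.I * θ) * starRingEnd ℂ z) ^ 3
          + Complex.I * (Complex.exp (2 * Complex.I * θ) * starRingEnd ℂ z)
            * (Complex.exp (-(2 * Complex.I * θ)) * z) ^ 2 := by
  constructor
  · have h1 : ((-Complex.I : ℂ)^(2:ℤ)) = -1 := by
      norm_num [zpow_two, Complex.I_mul_I]
    have h2 : ((Complex.I : ℂ)^(2:ℤ)) = -1 := by
      norm_num [zpow_two, Complex.I_mul_I]
    constructor
    · simp [h1]
    · simp [h2]
  refine ?_
  rintro ⟨θ, h⟩
  set a := Complex.exp (2 * Complex.I * θ) with ha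
  set b := Complex.exp (-(2 * Complex.I * θ)) with hbdef
  have hab : a * b = 1 := by
    rw [ha, hbdef, ← Complex.exp_add]
    simp
  have hI : Complex.I ^ 2 = -1 := Complex.I_sq
  have h1 := h 1
  have h2 := h (1 + Complex.I)
  simp only [map_add, map_mul, map_pow, map_one, map_neg, Complex.conj_I] at h1 h2
  have e1 : a ^ 3 + Complex.I * a * b ^ 2 = (1 - Complex.I) * a := by
    linear_combination -h1
  have e2 : (-2 - 2*Complex.I) * a ^ 3 + (-2 + 2*Complex.I) * (a * b ^ 2)
      = -4 * Complex.I * a := by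
    linear_combination -h2 + (a^3*(Complex.I - 3)
      + a*b^2*(Complex.I^2 + Complex.I - 2) + a*(Complex.I^2 + 1)) * hI
  have h3' : (4*Complex.I - 4) * (a * b ^ 2 + a) = 0 := by
    linear_combination (2 + 2*Complex.I) * e1 + e2 + (-2*(a*b^2 + a)) * hI
  have hne : (4*Complex.I - 4 : ℂ) ≠ 0 := by
    simp [Complex.ext_iff]
  have h3 : a * b ^ 2 = -a := by
    rcases mul_eq_zero.mp h3' with hc | hc
    · exact absurd hc hne
    · linear_combination hc
  have h4 : b = -a := by linear_combination h3 + (-b) * hab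
  have ha2 : a ^ 2 = -1 := by
    rw [h4] at hab
    linear_combination -hab
  have h5 : a = 0 := by
    linear_combination (-1/2 : ℂ) * e1 + (Complex.I/2) * h3 + (a/2) * ha2
  rw [h4, h5] at hab
  norm_num at hab
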